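/- Let $\lambda : A \times A \to (M, *)$ be a hermitian form in which the involution $*$ is the identity on $M$ (so $\lambda$ is symmetric). Then the homomorphism $p^c : M \to M^c_e$ given by $p^c(m) = [(m, 0)]$ is injective. -/

import Mathlib

namespace CST

/-- The normal closure of a set in an additive group: the smallest normal
subgroup containing the set. -/
def nclosure {G : Type*} [AddGroup G] (s : Set G) : AddSubgroup G :=
  sInf {N : AddSubgroup G | N.Normal ∧ s ⊆ N}

instance nclosure_normal {G : Type*} [AddGroup G] (s : Set G) :
    (nclosure s).Normal := by
  constructor
  intro n hn g
  rw [nclosure, AddSubgroup.mem_sInf] at hn ⊢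
  intro N hN
  exact hN.1.conj_mem n (hn N hN) g

variable {A M : Type*} [AddCommGroup A] [AddCommGroup M]

/-- The underlying type of the central extension `M ×_lam A` determined by a
bilinear map `lam : A × A → M`. -/
def Ext (lam : A →+ A →+ M) : Type _ := M × A

namespace Ext

variable (lam : A →+ A →+ M)

/-- The element of `M ×_lam A` given by the pair `(m, a)`. -/
def mkE (m : M) (a : A) : Ext lam := (m, a)

instance : Add (Ext lam) :=
  ⟨fun x y => (x.1 + y.1 - lam x.2 y.2, x.2 + y.2)⟩

instance : Zero (Ext lam) := ⟨((0 : M), (0 : A))⟩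

instance : Neg (Ext lam) :=
  ⟨fun x => (-x.1 - lam x.2 x.2, -x.2)⟩

theorem add_def (x y : Ext lam) :
    x + y = (x.1 + y.1 - lam x.2 y.2, x.2 + y.2) := rfl

theorem zero_def : (0 : Ext lam) = ((0 : M), (0 : A)) := rfl

theorem neg_def (x : Ext lam) : -x = (-x.1 - lam x.2 x.2, -x.2) := rfl

/-- The operation `(m, a) + (m', a') = (m + m' - lam a a', a + a')` makes
`M ×_lam A` into a group. -/
instance : AddGroup (Ext lam) :=
  AddGroup.ofLeftAxioms
    (by
      intro x y z
      refine Prod.ext ?_ ?_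
      · show x.1 + y.1 - lam x.2 y.2 + z.1 - lam (x.2 + y.2) z.2 =
          x.1 + (y.1 + z.1 - lam y.2 z.2) - lam x.2 (y.2 + z.2)
        simp only [map_add, AddMonoidHom.add_apply]; abel
      · show x.2 + y.2 + z.2 = x.2 + (y.2 + z.2)
        abel)
    (by
      intro x
      refine Prod.ext ?_ ?_
      · show (0 : M) + x.1 - lam 0 x.2 = x.1
        simp only [map_zero, AddMonoidHom.zero_apply]; abel
      · show (0 : A) + x.2 = x.2
        abel)
    (by
      intro x
      refine Prod.ext ?_ ?_
      · show -x.1 - lam x.2 x.2 + x.1 - lam (-x.2) x.2 = 0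
        simp only [map_neg, AddMonoidHom.neg_apply]; abel
      · show -x.2 + x.2 = 0
        abel)

/-- The function `h_lam (m, a) = m + m^* + lam a a`. -/
def hfun (star : M →+ M) : Ext lam → M :=
  fun x => x.1 + star x.1 + lam x.2 x.2

/-- The function `p_lam m = (m, 0)`. -/
def pfun : M → Ext lam := fun m => mkE lam m 0

/-- The function `mu_lam a = (0, a)`. -/
def mufun : A → Ext lam := fun a => mkE lam 0 a

/-- The set of relations `(m^*, -a) - (m, a)` in `M ×_lam A`. -/
def relSet (star : M →+ M) : Set (Ext lam) :=
  {x | ∃ (m : M) (a : A), x = mkE lam (star m) (-a) - mkE lam m a}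

end Ext

open Ext

/-- If the involution on `M` is the identity (so `lam` is
symmetric), then `p^c : M → M^c_e`, `m ↦ [(m, 0)]`, is injective. -/
theorem pc_injective (lam : A →+ A →+ M) (star : M →+ M)
    (star_star : ∀ m : M, star (star m) = m)
    (herm : ∀ a a' : A, lam a' a = star (lam a a'))
    (star_id : ∀ m : M, star m = m) :
    Function.Injective (fun m : M =>
      (QuotientAddGroup.mk (mkE lam m 0) :
        Ext lam ⧸ nclosure (relSet lam star))) := by
  have hsymm : ∀ a a' : A, lam a' a = lam a a' := by
    intro a a'; rw [herm, star_id]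
  have hcomm : ∀ x y : Ext lam, x + y = y + x := by
    intro x y
    simp only [Ext.add_def]
    refine Prod.ext ?_ ?_
    · show x.1 + y.1 - lam x.2 y.2 = y.1 + x.1 - lam y.2 x.2
      rw [hsymm x.2 y.2]; abel
    · show x.2 + y.2 = y.2 + x.2; abel
  -- the homomorphism a ↦ (-(lam a a + lam a a), -(a + a))
  let g : A →+ Ext lam :=
    { toFun := fun a => Ext.mkE lam (-(lam a a + lam a a)) (-(a + a))
      map_zero' := by
        simp only [map_zero, AddMonoidHom.zero_apply, neg_zero, add_zero]
        rfl
      map_add' := by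
        intro a b
        simp only [Ext.add_def, Ext.mkE]
        refine Prod.ext ?_ ?_
        · show -(lam (a + b) (a + b) + lam (a + b) (a + b)) =
            -(lam a a + lam a a) + -(lam b b + lam b b) - lam (-(a + a)) (-(b + b))
          simp only [map_add, map_neg, AddMonoidHom.add_apply, AddMonoidHom.neg_apply,
            neg_neg]
          rw [hsymm b a]; abel
        · show -(a + b + (a + b)) = -(a + a) + -(b + b); abel }
  have hnorm : (g.range : AddSubgroup (Ext lam)).Normal := by
    constructor
    intro n hn x
    have : x + n + -x = n := by
      rw [hcomm x n, add_assoc, add_neg_cancel, add_zero]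
    rwa [this]
  have hsub : relSet lam star ⊆ (g.range : Set (Ext lam)) := by
    rintro x ⟨m, a, rfl⟩
    refine ⟨a, ?_⟩
    show Ext.mkE lam (-(lam a a + lam a a)) (-(a + a)) =
      Ext.mkE lam (star m) (-a) - Ext.mkE lam m a
    rw [sub_eq_add_neg, Ext.add_def, Ext.neg_def]
    refine Prod.ext ?_ ?_
    · show -(lam a a + lam a a) = star m + (-m - lam a a) - lam (-a) (-a)
      rw [star_id]
      simp only [map_neg, AddMonoidHom.neg_apply, neg_neg]
      abel
    · show -(a + a) = -a + -a; abel
  have hle : nclosure (relSet lam star) ≤ g.range := sInf_le ⟨hnorm, hsub⟩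
  intro m m' h
  simp only at h
  rw [QuotientAddGroup.eq] at h
  obtain ⟨a, ha⟩ := hle h
  have ha' : Ext.mkE lam (-(lam a a + lam a a)) (-(a + a)) =
      -Ext.mkE lam m 0 + Ext.mkE lam m' 0 := ha
  rw [Ext.add_def, Ext.neg_def] at ha'
  have h1 := congrArg Prod.fst ha'
  have h2 := congrArg Prod.snd ha'
  simp only [Ext.mkE, map_zero, AddMonoidHom.zero_apply, neg_zero, sub_zero,
    add_zero] at h1 h2
  have h2' : a + a = 0 := by rw [← neg_eq_zero, h2]
  have hlz : lam a a + lam a a = 0 := by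
    have hz : lam (a + a) a = lam a a + lam a a := by
      simp [map_add]
    rw [← hz, h2']
    simp
  rw [hlz, neg_zero] at h1
  have h1' := h1.symm
  rwa [neg_add_eq_zero] at h1'

end CST
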